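/- Equivalence of the divergence constraint with the second elliptic equation: assume the horizontal momentum correction equation (hu − h̃u)/Δt = −(1/ρ)·(h̃·p)_x + (d_x/ρ)·[ 6/(4+d_x²)·p + d_x/(4+d_x²)·(h̃·p)_x + φ ] and the vertical momentum correction equation (hw − h̃w)/Δt = (1/ρ)·[ 6/(4+d_x²)·p + d_x/(4+d_x²)·(h̃·p)_x + φ ] hold at every x. Then the corrected divergence constraint 2·(hw) + (hu)·(2·d_x − h̃_x) + 2·h̃·d_t = −h̃·(hu)_x holds at x if and only if the second elliptic equation (hu)_x + ((3·d_x − 2·h̃_x)/(2·h̃))·(hu) + (3·Δt/(ρ·h̃))·p = −2·d_t − 2·(h̃w)/h̃ − d_x·(h̃u)/(2·h̃) − (Δt·(4+d_x²)/(2·ρ·h̃))·φ holds at x. -/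

import Mathlib

lemma alg (ρ Δt H D Hx P Q ph tu tw u w ux dt : ℝ)
    (hρ : ρ ≠ 0) (hΔt : Δt ≠ 0) (hH : H ≠ 0)
    (hU : (u - tu)/Δt = -(1/ρ)*Q + (D/ρ)*(6/(4+D^2)*P + D/(4+D^2)*Q + ph))
    (hW : (w - tw)/Δt = (1/ρ)*(6/(4+D^2)*P + D/(4+D^2)*Q + ph)) :
    (2*w + u*(2*D - Hx) + 2*H*dt = -H*ux) ↔
    (ux + ((3*D-2*Hx)/(2*H))*u + (3*Δt/(ρ*H))*P
      = -2*dt - 2*tw/H - D*tu/(2*H) - (Δt*(4+D^2)/(2*ρ*H))*ph) := by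
  have h4 : (4:ℝ)+D^2 ≠ 0 := by positivity
  have hB : (6/(4+D^2)*P + D/(4+D^2)*Q + ph) = ρ*((w-tw)/Δt) := by
    rw [hW]; field_simp
  have hUW : ρ*(u - tu) = -(Δt*Q) + ρ*D*(w - tw) := by
    have h' := hU
    rw [hB] at h'
    field_simp at h'
    apply mul_left_cancel₀ (mul_ne_zero hρ hΔt)
    linear_combination (ρ*Δt)*h'
  have hW2 : ρ*(4+D^2)*(w-tw) = Δt*(6*P + D*Q + ph*(4+D^2)) := by
    field_simp at hW
    linear_combination hW
  have key : (2*w + u*(2*D - Hx) + 2*H*dt) - (-H*ux)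
      = H * ((ux + ((3*D-2*Hx)/(2*H))*u + (3*Δt/(ρ*H))*P)
          - (-2*dt - 2*tw/H - D*tu/(2*H) - (Δt*(4+D^2)/(2*ρ*H))*ph)) := by
    field_simp
    linear_combination D*hUW + hW2
  constructor <;> intro h
  · have h0 : (2*w + u*(2*D - Hx) + 2*H*dt) - (-H*ux) = 0 := by linarith
    rw [key] at h0
    rcases mul_eq_zero.mp h0 with h1 | h1
    · exact absurd h1 hH
    · linarith
  · have h0 : H * ((ux + ((3*D-2*Hx)/(2*H))*u + (3*Δt/(ρ*H))*P)
          - (-2*dt - 2*tw/H - D*tu/(2*H) - (Δt*(4+D^2)/(2*ρ*H))*ph)) = 0 := by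
      rw [show (ux + ((3*D-2*Hx)/(2*H))*u + (3*Δt/(ρ*H))*P)
          - (-2*dt - 2*tw/H - D*tu/(2*H) - (Δt*(4+D^2)/(2*ρ*H))*ph) = 0 by linarith]
      ring
    rw [← key] at h0
    linarith


/-- Equivalence of the corrected divergence constraint with the second elliptic
equation, assuming the horizontal and vertical momentum correction equations
hold at every point. -/
theorem divergence_constraint_iff_second_elliptic
    (ρ Δt : ℝ) (hρ : 0 < ρ) (hΔt : 0 < Δt)
    (d htil htu htw hu hw p φ d_t : ℝ → ℝ)
    (hd : Differentiable ℝ d)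
    (hhtil : Differentiable ℝ htil)
    (hhtu : Differentiable ℝ htu)
    (hhtw : Differentiable ℝ htw)
    (hhu : Differentiable ℝ hu)
    (hhw : Differentiable ℝ hw)
    (hp : Differentiable ℝ p)
    (hφ : Differentiable ℝ φ)
    (hpos : ∀ x, 0 < htil x)
    (hcorr_u : ∀ x, (hu x - htu x) / Δt
        = -(1 / ρ) * deriv (fun y => htil y * p y) x
          + (deriv d x / ρ) *
              (6 / (4 + (deriv d x) ^ 2) * p x
                + deriv d x / (4 + (deriv d x) ^ 2)
                    * deriv (fun y => htil y * p y) x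
                + φ x))
    (hcorr_w : ∀ x, (hw x - htw x) / Δt
        = (1 / ρ) *
            (6 / (4 + (deriv d x) ^ 2) * p x
              + deriv d x / (4 + (deriv d x) ^ 2)
                  * deriv (fun y => htil y * p y) x
              + φ x)) :
    ∀ x : ℝ,
      (2 * hw x + hu x * (2 * deriv d x - deriv htil x)
          + 2 * htil x * d_t x
        = -(htil x) * deriv hu x)
        ↔
      (deriv hu x
          + ((3 * deriv d x - 2 * deriv htil x) / (2 * htil x)) * hu x
          + (3 * Δt / (ρ * htil x)) * p x
        = -2 * d_t x - 2 * htw x / htil x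
            - deriv d x * htu x / (2 * htil x)
            - (Δt * (4 + (deriv d x) ^ 2) / (2 * ρ * htil x)) * φ x) := by
  intro x
  exact alg ρ Δt (htil x) (deriv d x) (deriv htil x) (p x)
    (deriv (fun y => htil y * p y) x) (φ x) (htu x) (htw x) (hu x) (hw x)
    (deriv hu x) (d_t x) hρ.ne' hΔt.ne' (hpos x).ne' (hcorr_u x) (hcorr_w x)
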